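/- Assume w > 4, fix a real u ≥ 1 and an integer m ≥ 2, and define x* : ℕ⁺ → ℝ by x*(1) = a(m−1)·u and x*(i) = w·x*(i−1) − ∑_{j=1}^{i−1} x*(j) for i ≥ 2. Let ρ₁ = (w−√(w²−4w))/2 and ρ₂ = (w+√(w²−4w))/2 (the two roots of z²−wz+w = 0, with 1 < ρ₁ < ρ₂), and set α = u·(a(m−1)·ρ₂^{m−1}−1)/(ρ₂^{m−1}−ρ₁^{m−1}) and β = u·(a(m−1)·ρ₁^{m−1}−1)/(ρ₁^{m−1}−ρ₂^{m−1}). Then: (i) x*(i) = α·ρ₁^{i−1} + β·ρ₂^{i−1} for every i ≥ 1; (ii) β > 0 and α + β = a(m−1)·u > 0; (iii) x*(m) = u; (iv) x* is strictly increasing in i; and (v) x*(i) → +∞ as i → ∞. -/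

import Mathlib

/-- The sequence `b` with `b 0 = 0` and `b i = (1 + b (i-1)) / (w - 1 - b (i-1))`. -/
noncomputable def bseq (w : ℝ) : ℕ → ℝ
  | 0 => 0
  | i + 1 => (1 + bseq w i) / (w - 1 - bseq w i)

/-- The sequence `a` with `a 0 = 1` and `a i = a (i-1) / (w - 1 - b (i-1))`. -/
noncomputable def aseq (w : ℝ) : ℕ → ℝ
  | 0 => 1
  | i + 1 => aseq w i / (w - 1 - bseq w i)

/-- The sequence `d` with `d 0 = 1` and `d i = d (i-1) * (1 + b (i-1))`. -/
noncomputable def dseq (w : ℝ) : ℕ → ℝ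
  | 0 => 1
  | i + 1 => dseq w i * (1 + bseq w i)

/-- The sequence `c` with `c 0 = 0` and `c i = c (i-1) + d (i-1) * a (i-1)`. -/
noncomputable def cseq (w : ℝ) : ℕ → ℝ
  | 0 => 0
  | i + 1 => cseq w i + dseq w i * aseq w i

/-- closed form and properties of the optimal bid sequence `x*` when `w > 4`. -/
theorem xstar_closed_form_w_gt_four (w : ℝ) (hw : 4 < w) (u : ℝ) (hu : 1 ≤ u)
    (m : ℕ) (hm : 2 ≤ m)
    (x : ℕ → ℝ) (hx1 : x 1 = aseq w (m - 1) * u)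
    (hxrec : ∀ i : ℕ, 2 ≤ i → x i = w * x (i - 1) - ∑ j ∈ Finset.Icc 1 (i - 1), x j)
    (ρ₁ ρ₂ : ℝ)
    (hρ₁ : ρ₁ = (w - Real.sqrt (w ^ 2 - 4 * w)) / 2)
    (hρ₂ : ρ₂ = (w + Real.sqrt (w ^ 2 - 4 * w)) / 2)
    (α β : ℝ)
    (hα : α = u * (aseq w (m - 1) * ρ₂ ^ (m - 1) - 1) / (ρ₂ ^ (m - 1) - ρ₁ ^ (m - 1)))
    (hβ : β = u * (aseq w (m - 1) * ρ₁ ^ (m - 1) - 1) / (ρ₁ ^ (m - 1) - ρ₂ ^ (m - 1))) :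
    (∀ i : ℕ, 1 ≤ i → x i = α * ρ₁ ^ (i - 1) + β * ρ₂ ^ (i - 1)) ∧
    (0 < β ∧ α + β = aseq w (m - 1) * u ∧ 0 < aseq w (m - 1) * u) ∧
    x m = u ∧
    (∀ i : ℕ, 1 ≤ i → x i < x (i + 1)) ∧
    Filter.Tendsto x Filter.atTop Filter.atTop := by
  -- basic facts about the roots
  have hw0 : (0:ℝ) < w := by linarith
  have hD : (0:ℝ) < w ^ 2 - 4 * w := by nlinarith
  have hs2 : Real.sqrt (w ^ 2 - 4 * w) ^ 2 = w ^ 2 - 4 * w := Real.sq_sqrt hD.le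
  have hspos : 0 < Real.sqrt (w ^ 2 - 4 * w) := Real.sqrt_pos.mpr hD
  have hslt : Real.sqrt (w ^ 2 - 4 * w) < w - 2 := by nlinarith
  have h1ρ₁ : 1 < ρ₁ := by rw [hρ₁]; linarith
  have hρ₁pos : 0 < ρ₁ := by linarith
  have hρlt : ρ₁ < ρ₂ := by rw [hρ₁, hρ₂]; linarith
  have h1ρ₂ : 1 < ρ₂ := by linarith
  have hsum : ρ₁ + ρ₂ = w := by rw [hρ₁, hρ₂]; ring
  have hprod : ρ₁ * ρ₂ = w := by rw [hρ₁, hρ₂]; nlinarith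
  have hq1 : ρ₁ ^ 2 = w * ρ₁ - w := by linear_combination ρ₁ * hsum - hprod
  have hq2 : ρ₂ ^ 2 = w * ρ₂ - w := by linear_combination ρ₂ * hsum - hprod
  have hple : ∀ n : ℕ, ρ₁ ^ n ≤ ρ₂ ^ n := fun n => pow_le_pow_left₀ hρ₁pos.le hρlt.le n
  have hppos : ∀ n : ℕ, 0 < ρ₁ ^ n := fun n => pow_pos hρ₁pos n
  have hTpos : ∀ n : ℕ, 0 < (ρ₂ - 1) * ρ₂ ^ n - (ρ₁ - 1) * ρ₁ ^ n := by
    intro n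
    have h1 := hple n
    have h2 := hppos n
    nlinarith
  -- closed form of bseq and aseq
  have key : ∀ n : ℕ,
      bseq w n = (ρ₂ ^ n - ρ₁ ^ n) / ((ρ₂ - 1) * ρ₂ ^ n - (ρ₁ - 1) * ρ₁ ^ n) ∧
      aseq w n = (ρ₂ - ρ₁) / ((ρ₂ - 1) * ρ₂ ^ n - (ρ₁ - 1) * ρ₁ ^ n) := by
    intro n
    induction n with
    | zero =>
      constructor
      · simp [bseq]
      · have h0 := hTpos 0
        simp only [aseq, pow_zero, mul_one]
        rw [eq_div_iff (by simpa using h0.ne')]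
        ring
    | succ n ih =>
      obtain ⟨hb, ha⟩ := ih
      have htn := hTpos n
      have htn1 := hTpos (n + 1)
      have hnum : 1 + bseq w n =
          (ρ₂ ^ (n+1) - ρ₁ ^ (n+1)) / ((ρ₂ - 1) * ρ₂ ^ n - (ρ₁ - 1) * ρ₁ ^ n) := by
        rw [hb, eq_div_iff htn.ne', add_mul, div_mul_cancel₀ _ htn.ne']
        ring
      have hden : w - 1 - bseq w n =
          ((ρ₂ - 1) * ρ₂ ^ (n+1) - (ρ₁ - 1) * ρ₁ ^ (n+1)) /
            ((ρ₂ - 1) * ρ₂ ^ n - (ρ₁ - 1) * ρ₁ ^ n) := by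
        rw [hb, eq_div_iff htn.ne', sub_mul, div_mul_cancel₀ _ htn.ne']
        linear_combination ρ₁ ^ n * hq1 - ρ₂ ^ n * hq2
      constructor
      · rw [bseq, hnum, hden, div_div_div_cancel_right₀ htn.ne']
      · rw [aseq, ha, hden, div_div_div_cancel_right₀ htn.ne']
  -- set up m = K + 2
  obtain ⟨K, rfl⟩ : ∃ K, m = K + 2 := ⟨m - 2, by omega⟩
  simp only [show K + 2 - 1 = K + 1 from rfl] at hα hβ hx1 ⊢
  set A := aseq w (K + 1) with hAdef
  have hAval : A = (ρ₂ - ρ₁) / ((ρ₂ - 1) * ρ₂ ^ (K+1) - (ρ₁ - 1) * ρ₁ ^ (K+1)) := (key (K+1)).2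
  have hT := hTpos (K + 1)
  have hApos : 0 < A := by rw [hAval]; exact div_pos (by linarith) hT
  have hPlt : ρ₁ ^ (K+1) < ρ₂ ^ (K+1) := by
    exact pow_lt_pow_left₀ hρlt hρ₁pos.le (Nat.succ_ne_zero K)
  have hDpos : 0 < ρ₂ ^ (K+1) - ρ₁ ^ (K+1) := by linarith
  have hDne : ρ₂ ^ (K+1) - ρ₁ ^ (K+1) ≠ 0 := ne_of_gt hDpos
  have hDne' : ρ₁ ^ (K+1) - ρ₂ ^ (K+1) ≠ 0 := by
    intro h; apply hDne; linarith
  have hupos : (0:ℝ) < u := lt_of_lt_of_le one_pos hu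
  -- rewrite β with the same denominator as α
  have hβ' : β = u * (1 - A * ρ₁ ^ (K+1)) / (ρ₂ ^ (K+1) - ρ₁ ^ (K+1)) := by
    rw [hβ, div_eq_div_iff hDne' hDne]; ring
  -- key scalar identities
  have hF1 : α + β = A * u := by
    rw [hα, hβ', ← add_div, div_eq_iff hDne]; ring
  have hA : A * ((ρ₂ - 1) * ρ₂ ^ (K+1) - (ρ₁ - 1) * ρ₁ ^ (K+1)) = ρ₂ - ρ₁ := by
    rw [hAval, div_mul_cancel₀ _ hT.ne']
  have hF3 : α * ρ₁ ^ (K+1) + β * ρ₂ ^ (K+1) = u := by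
    rw [hα, hβ', div_mul_eq_mul_div, div_mul_eq_mul_div, ← add_div, div_eq_iff hDne]
    ring
  have hF2 : α * ρ₁ + β * ρ₂ = (w - 1) * (A * u) := by
    rw [hα, hβ', div_mul_eq_mul_div, div_mul_eq_mul_div, ← add_div, div_eq_iff hDne]
    linear_combination (-u) * hA + u * A * (ρ₂ ^ (K+1) - ρ₁ ^ (K+1)) * hsum
  -- positivity of β
  have hAP1 : A * ρ₁ ^ (K+1) < 1 := by
    rw [hAval, div_mul_eq_mul_div, div_lt_one hT]
    linarith [mul_lt_mul_of_pos_left hPlt (show (0:ℝ) < ρ₂ - 1 by linarith),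
      mul_pos (show (0:ℝ) < ρ₁ - 1 by linarith) (hppos (K+1))]
  have hβpos : 0 < β := by
    rw [hβ']
    exact div_pos (mul_pos hupos (by linarith)) hDpos
  -- x values
  have hx2 : x 2 = (w - 1) * x 1 := by
    have h := hxrec 2 le_rfl
    simp only [show (2:ℕ) - 1 = 1 from rfl, Finset.Icc_self, Finset.sum_singleton] at h
    linarith
  have hrec2 : ∀ n : ℕ, x (n + 3) = w * x (n + 2) - w * x (n + 1) := by
    intro n
    have h1 := hxrec (n + 3) (by omega)
    have h2 := hxrec (n + 2) (by omega)
    simp only [show n + 3 - 1 = n + 2 from rfl, show n + 2 - 1 = n + 1 from rfl] at h1 h2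
    have hsum' : ∑ j ∈ Finset.Icc 1 (n + 2), x j =
        (∑ j ∈ Finset.Icc 1 (n + 1), x j) + x (n + 2) :=
      Finset.sum_Icc_succ_top (by omega) x
    rw [hsum'] at h1
    linarith
  -- closed form by two-step induction
  have hQ : ∀ k : ℕ, x (k + 1) = α * ρ₁ ^ k + β * ρ₂ ^ k ∧
      x (k + 2) = α * ρ₁ ^ (k + 1) + β * ρ₂ ^ (k + 1) := by
    intro k
    induction k with
    | zero =>
      constructor
      · simpa using hx1.trans hF1.symm
      · rw [hx2, hx1, ← hF2]; ring
    | succ k ih =>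
      refine ⟨ih.2, ?_⟩
      have e1 : k + 1 + 2 = k + 3 := by omega
      have e2 : k + 1 + 1 = k + 2 := by omega
      rw [e1, e2, hrec2 k, ih.1, ih.2]
      linear_combination (-(α * ρ₁ ^ k)) * hq1 + (-(β * ρ₂ ^ k)) * hq2
  have hclosed : ∀ i : ℕ, 1 ≤ i → x i = α * ρ₁ ^ (i - 1) + β * ρ₂ ^ (i - 1) := by
    intro i hi
    obtain ⟨j, rfl⟩ : ∃ j, i = j + 1 := ⟨i - 1, by omega⟩
    simpa using (hQ j).1
  -- increments
  have hc : 0 < α * (ρ₁ - 1) + β * (ρ₂ - 1) := by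
    linarith [hF1, hF2, mul_pos (show (0:ℝ) < w - 2 by linarith) (mul_pos hApos hupos)]
  have hstep : ∀ j : ℕ, x (j + 1) + (α * (ρ₁ - 1) + β * (ρ₂ - 1)) ≤ x (j + 2) := by
    intro j
    rw [(hQ j).1, (hQ j).2, pow_succ, pow_succ]
    have h1 : (1:ℝ) ≤ ρ₁ ^ j := one_le_pow₀ h1ρ₁.le
    have h2 : ρ₁ ^ j ≤ ρ₂ ^ j := hple j
    have h3 : (α * (ρ₁ - 1) + β * (ρ₂ - 1)) ≤ ρ₁ ^ j * (α * (ρ₁ - 1) + β * (ρ₂ - 1)) :=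
      le_mul_of_one_le_left hc.le h1
    have h4 : 0 ≤ β * (ρ₂ - 1) * (ρ₂ ^ j - ρ₁ ^ j) :=
      mul_nonneg (mul_nonneg hβpos.le (by linarith)) (by linarith)
    linarith [h3, h4]
  have hmono : ∀ i : ℕ, 1 ≤ i → x i < x (i + 1) := by
    intro i hi
    obtain ⟨j, rfl⟩ : ∃ j, i = j + 1 := ⟨i - 1, by omega⟩
    have := hstep j
    have e : j + 1 + 1 = j + 2 := by omega
    rw [e]
    linarith
  -- lower bound and divergence
  have hlb : ∀ k : ℕ, x 1 + k * (α * (ρ₁ - 1) + β * (ρ₂ - 1)) ≤ x (k + 1) := by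
    intro k
    induction k with
    | zero => simp
    | succ k ih =>
      have hs' := hstep k
      have e : k + 1 + 1 = k + 2 := rfl
      rw [e]
      push_cast
      push_cast at ih
      linarith [hs', ih]
  have htend : Filter.Tendsto x Filter.atTop Filter.atTop := by
    apply Filter.tendsto_atTop_mono' Filter.atTop
      (f₁ := fun n : ℕ => x 1 + ((n:ℝ) - 1) * (α * (ρ₁ - 1) + β * (ρ₂ - 1)))
    · filter_upwards [Filter.eventually_ge_atTop 1] with n hn
      obtain ⟨k, rfl⟩ : ∃ k, n = k + 1 := ⟨n - 1, by omega⟩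
      have := hlb k
      push_cast
      push_cast at this
      linarith
    · apply Filter.tendsto_atTop_add_const_left
      apply Filter.Tendsto.atTop_mul_const hc
      apply Filter.tendsto_atTop_add_const_right
      exact tendsto_natCast_atTop_atTop
  refine ⟨hclosed, ⟨hβpos, hF1.trans rfl, mul_pos hApos hupos⟩, ?_, hmono, htend⟩
  -- x m = u
  have := (hQ (K + 1)).1
  rw [show K + 1 + 1 = K + 2 from rfl] at this
  rw [this, hF3]
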